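/- arXiv:2003.11403 — 2 statements merged into one kernel-verified Lean document; each statement's English description precedes it below -/
import Mathlib

section
/- Let (S, ρ) be a complete separable metric space, let V : S × S → [0,∞) be lower semicontinuous and positive definite (V(s₁,s₂) = 0 if and only if s₁ = s₂). Let (Ω, F, P) be a probability space and T̂ : Ω × S → S a jointly measurable map, and let Q be the Markov transition kernel on S defined by Q(s, B) = P({ω : T̂(ω, s) ∈ B}). If there exists α ∈ (0,1) such that ∫_Ω V(T̂(ω,s), T̂(ω,s')) dP(ω) ≤ α · V(s, s') for all s, s' ∈ S, then W_V(μ₁Q, μ₂Q) ≤ α · W_V(μ₁, μ₂) for all Borel probability measures μ₁, μ₂ on S for which W_V(μ₁, μ₂) is finite. -/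
open MeasureTheory ProbabilityTheory Filter Topology
open scoped ENNReal NNReal

variable {S : Type*}

/-- `ξ` is a coupling of `μ₁` and `μ₂`: a Borel probability measure on `S × S`
whose first marginal is `μ₁` and second marginal is `μ₂`. -/
def IsCoupling [MeasurableSpace S] (ξ : Measure (S × S)) (μ₁ μ₂ : Measure S) : Prop :=
  IsProbabilityMeasure ξ ∧ ξ.map Prod.fst = μ₁ ∧ ξ.map Prod.snd = μ₂

/-- The Wasserstein divergence associated with a nonnegative function `V`:
`W_V(μ₁, μ₂) = inf over couplings ξ of ∫ V dξ`. -/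
noncomputable def WV [MeasurableSpace S] (V : S → S → ℝ) (μ₁ μ₂ : Measure S) : ℝ≥0∞ :=
  ⨅ (ξ : Measure (S × S)) (_ : IsCoupling ξ μ₁ μ₂),
    ∫⁻ p, ENNReal.ofReal (V p.1 p.2) ∂ξ

/-- One-step action of a Markov kernel on measures: `μ ↦ μQ`. -/
noncomputable def kernelStep [MeasurableSpace S] (Q : Kernel S S) (μ : Measure S) : Measure S :=
  μ.bind (fun s => Q s)

/-- The `k`-fold action `μ ↦ μQ^k`. -/
noncomputable def kernelIter [MeasurableSpace S] (Q : Kernel S S) (k : ℕ) (μ : Measure S) :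
    Measure S :=
  (kernelStep Q)^[k] μ

/-- The distribution of an iterated random operator contracting on average with respect to a
divergence `V` induces a Markov kernel that is a contraction with respect to the
Wasserstein divergence `W_V`. -/
theorem wasserstein_contraction_of_random_operator
    [MetricSpace S] [CompleteSpace S] [TopologicalSpace.SeparableSpace S]
    [MeasurableSpace S] [BorelSpace S]
    {Ω : Type*} [MeasurableSpace Ω] (P : Measure Ω) [IsProbabilityMeasure P]
    (V : S → S → ℝ)
    (hVnn : ∀ s₁ s₂, 0 ≤ V s₁ s₂)
    (hVlsc : LowerSemicontinuous (fun p : S × S => V p.1 p.2))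
    (hVpd : ∀ s₁ s₂, V s₁ s₂ = 0 ↔ s₁ = s₂)
    (T : Ω → S → S)
    (hTmeas : Measurable (fun p : Ω × S => T p.1 p.2))
    (Q : Kernel S S) [IsMarkovKernel Q]
    (hQ : ∀ s : S, Q s = P.map (fun ω => T ω s))
    (α : ℝ) (hα0 : 0 < α) (hα1 : α < 1)
    (hcontr : ∀ s s' : S,
      ∫⁻ ω, ENNReal.ofReal (V (T ω s) (T ω s')) ∂P ≤
        ENNReal.ofReal α * ENNReal.ofReal (V s s'))
    (μ₁ μ₂ : Measure S) [IsProbabilityMeasure μ₁] [IsProbabilityMeasure μ₂]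
    (hfin : WV V μ₁ μ₂ ≠ ⊤) :
    WV V (kernelStep Q μ₁) (kernelStep Q μ₂) ≤ ENNReal.ofReal α * WV V μ₁ μ₂ := by
  have hVmeas : Measurable (fun p : S × S => ENNReal.ofReal (V p.1 p.2)) :=
    (ENNReal.measurable_ofReal.comp hVlsc.measurable)
  -- the map (ω, (s,s')) ↦ (T ω s, T ω s')
  set g : Ω × (S × S) → S × S := fun q => (T q.1 q.2.1, T q.1 q.2.2) with hg
  have hgmeas : Measurable g :=
    (hTmeas.comp (measurable_fst.prodMk (measurable_fst.comp measurable_snd))).prodMk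
      (hTmeas.comp (measurable_fst.prodMk (measurable_snd.comp measurable_snd)))
  -- key claim: for each coupling ξ, the pushforward is a coupling of the stepped measures
  have key : ∀ ξ : Measure (S × S), IsCoupling ξ μ₁ μ₂ →
      WV V (kernelStep Q μ₁) (kernelStep Q μ₂) ≤
        ENNReal.ofReal α * ∫⁻ p, ENNReal.ofReal (V p.1 p.2) ∂ξ := by
    intro ξ hξ
    obtain ⟨hξprob, hξ1, hξ2⟩ := hξ
    haveI := hξprob
    set ξ' : Measure (S × S) := (P.prod ξ).map g with hξ'
    -- first marginal
    have hfst : ξ'.map Prod.fst = kernelStep Q μ₁ := by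
      rw [hξ', Measure.map_map measurable_fst hgmeas]
      have hcomp : Prod.fst ∘ g = fun q : Ω × (S × S) => T q.1 q.2.1 := rfl
      rw [hcomp]
      ext B hB
      have hpre : Measurable (fun q : Ω × (S × S) => T q.1 q.2.1) :=
        hTmeas.comp (measurable_fst.prodMk (measurable_fst.comp measurable_snd))
      rw [Measure.map_apply hpre hB, Measure.prod_apply_symm (hpre hB)]
      have hQmeas : Measurable (fun s : S => Q s B) := Q.measurable_coe hB
      have step1 : ∀ p : S × S, (P {ω | T ω p.1 ∈ B}) = Q p.1 B := by
        intro p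
        have hm : Measurable (fun ω => T ω p.1) :=
          hTmeas.comp (measurable_id.prodMk measurable_const)
        rw [hQ, Measure.map_apply hm hB]
        rfl
      calc ∫⁻ p : S × S, P ((fun ω => (ω, p)) ⁻¹' ((fun q : Ω × (S × S) => T q.1 q.2.1) ⁻¹' B)) ∂ξ
          = ∫⁻ p : S × S, Q p.1 B ∂ξ := lintegral_congr fun p => step1 p
        _ = ∫⁻ s, Q s B ∂(ξ.map Prod.fst) := by
            rw [lintegral_map hQmeas measurable_fst]
        _ = ∫⁻ s, Q s B ∂μ₁ := by rw [hξ1]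
        _ = (kernelStep Q μ₁) B := by
            rw [kernelStep, Measure.bind_apply hB (Kernel.measurable Q).aemeasurable]
    -- second marginal
    have hsnd : ξ'.map Prod.snd = kernelStep Q μ₂ := by
      rw [hξ', Measure.map_map measurable_snd hgmeas]
      have hcomp : Prod.snd ∘ g = fun q : Ω × (S × S) => T q.1 q.2.2 := rfl
      rw [hcomp]
      ext B hB
      have hpre : Measurable (fun q : Ω × (S × S) => T q.1 q.2.2) :=
        hTmeas.comp (measurable_fst.prodMk (measurable_snd.comp measurable_snd))
      rw [Measure.map_apply hpre hB, Measure.prod_apply_symm (hpre hB)]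
      have hQmeas : Measurable (fun s : S => Q s B) := Q.measurable_coe hB
      have step1 : ∀ p : S × S, (P {ω | T ω p.2 ∈ B}) = Q p.2 B := by
        intro p
        have hm : Measurable (fun ω => T ω p.2) :=
          hTmeas.comp (measurable_id.prodMk measurable_const)
        rw [hQ, Measure.map_apply hm hB]
        rfl
      calc ∫⁻ p : S × S, P ((fun ω => (ω, p)) ⁻¹' ((fun q : Ω × (S × S) => T q.1 q.2.2) ⁻¹' B)) ∂ξ
          = ∫⁻ p : S × S, Q p.2 B ∂ξ := lintegral_congr fun p => step1 p
        _ = ∫⁻ s, Q s B ∂(ξ.map Prod.snd) := by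
            rw [lintegral_map hQmeas measurable_snd]
        _ = ∫⁻ s, Q s B ∂μ₂ := by rw [hξ2]
        _ = (kernelStep Q μ₂) B := by
            rw [kernelStep, Measure.bind_apply hB (Kernel.measurable Q).aemeasurable]
    have hξ'coupling : IsCoupling ξ' (kernelStep Q μ₁) (kernelStep Q μ₂) :=
      ⟨Measure.isProbabilityMeasure_map hgmeas.aemeasurable, hfst, hsnd⟩
    -- bound the integral against ξ'
    have hint : ∫⁻ p, ENNReal.ofReal (V p.1 p.2) ∂ξ'
        ≤ ENNReal.ofReal α * ∫⁻ p, ENNReal.ofReal (V p.1 p.2) ∂ξ := by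
      rw [hξ', lintegral_map hVmeas hgmeas]
      have heq : ∫⁻ q, ENNReal.ofReal (V (g q).1 (g q).2) ∂(P.prod ξ)
          = ∫⁻ p : S × S, ∫⁻ ω, ENNReal.ofReal (V (T ω p.1) (T ω p.2)) ∂P ∂ξ := by
        exact lintegral_prod_symm _ ((hVmeas.comp hgmeas).aemeasurable)
      rw [heq]
      calc ∫⁻ p : S × S, ∫⁻ ω, ENNReal.ofReal (V (T ω p.1) (T ω p.2)) ∂P ∂ξ
          ≤ ∫⁻ p : S × S, ENNReal.ofReal α * ENNReal.ofReal (V p.1 p.2) ∂ξ :=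
            lintegral_mono fun p => hcontr p.1 p.2
        _ = ENNReal.ofReal α * ∫⁻ p, ENNReal.ofReal (V p.1 p.2) ∂ξ :=
            lintegral_const_mul _ hVmeas
    calc WV V (kernelStep Q μ₁) (kernelStep Q μ₂)
        ≤ ∫⁻ p, ENNReal.ofReal (V p.1 p.2) ∂ξ' := iInf₂_le ξ' hξ'coupling
      _ ≤ ENNReal.ofReal α * ∫⁻ p, ENNReal.ofReal (V p.1 p.2) ∂ξ := hint
  -- conclude by pulling the constant through the infimum
  have hα0' : ENNReal.ofReal α ≠ 0 := by
    simp [ENNReal.ofReal_eq_zero, not_le, hα0]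
  have hαtop : ENNReal.ofReal α ≠ ⊤ := ENNReal.ofReal_ne_top
  rw [WV, WV, ENNReal.mul_iInf_of_ne hα0' hαtop]
  refine le_iInf fun ξ => ?_
  rw [ENNReal.mul_iInf_of_ne hα0' hαtop]
  exact le_iInf fun hξ => key ξ hξ
end

section
/- Let N ∈ ℕ, N ≥ 1, 0 < c ≤ L, b > 0, and let f₁, …, f_N : ℝ^d → ℝ be c-strongly convex differentiable functions whose gradients are L-Lipschitz. On S = ℝ^d × (ℝ^d)^N with elements s = (x, (φ_n)_{n=1}^N), define V_b(s, s') = ‖x − x'‖₂² + b · Σ_{n=1}^N ‖∇f_n(φ_n) − ∇f_n(φ'_n)‖₂². Then V_b is a divergence function: it is lower semicontinuous, V_b(s,s') = 0 if and only if s = s', V_b is symmetric, and V_b satisfies inf-compactness (for every q ≥ 0 and every compact K ⊆ S there is a compact L ⊆ S with V_b(s₁,s₂) ≥ q whenever s₁ ∉ L and s₂ ∈ K). -/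
open MeasureTheory ProbabilityTheory Filter Topology
open scoped ENNReal NNReal


/-- A divergence function on a metric space: lower semicontinuous, nonnegative,
positive definite, symmetric, and inf-compact. -/
structure IsDivergence {S : Type*} [MetricSpace S] (V : S → S → ℝ) : Prop where
  nonneg : ∀ s₁ s₂, 0 ≤ V s₁ s₂
  lsc : LowerSemicontinuous (fun p : S × S => V p.1 p.2)
  eq_zero_iff : ∀ s₁ s₂, V s₁ s₂ = 0 ↔ s₁ = s₂
  symm : ∀ s₁ s₂, V s₁ s₂ = V s₂ s₁
  infCompact : ∀ q : ℝ, 0 ≤ q → ∀ K : Set S, IsCompact K →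
    ∃ L : Set S, IsCompact L ∧ ∀ s₁ ∉ L, ∀ s₂ ∈ K, q ≤ V s₁ s₂

section Aux
open Set
open scoped RealInnerProductSpace

private lemma saga_conv_dir_deriv_le {E : Type*} [NormedAddCommGroup E] [NormedSpace ℝ E]
    {h : E → ℝ} (hconv : ConvexOn ℝ Set.univ h) {x v : E} {D : ℝ}
    (hD : HasDerivAt (fun t : ℝ => h (x + t • v)) D 0) : D ≤ h (x + v) - h x := by
  have hmono : 𝓝[>] (0:ℝ) ≤ 𝓝[≠] (0:ℝ) :=
    nhdsWithin_mono _ (fun t ht => Set.mem_compl_singleton_iff.mpr (ne_of_gt ht))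
  have H : Tendsto (slope (fun t : ℝ => h (x + t • v)) 0) (𝓝[>] 0) (𝓝 D) :=
    (hasDerivAt_iff_tendsto_slope.mp hD).mono_left hmono
  refine le_of_tendsto H ?_
  filter_upwards [Ioc_mem_nhdsGT_of_mem (by constructor <;> norm_num : (0:ℝ) ∈ Set.Ico 0 1)]
    with t ht
  obtain ⟨ht0, ht1⟩ := ht
  have key : h (x + t • v) ≤ (1 - t) * h x + t * h (x + v) := by
    have := hconv.2 (Set.mem_univ x) (Set.mem_univ (x + v))
      (by linarith : (0:ℝ) ≤ 1 - t) (le_of_lt ht0) (by ring)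
    have e : (1 - t) • x + t • (x + v) = x + t • v := by
      simp [smul_add, sub_smul, one_smul]; abel
    rw [e] at this
    simpa using this
  rw [slope_def_field]
  rw [div_le_iff₀ (by simpa using ht0)]
  simp only [smul_eq_mul, zero_smul, add_zero, sub_zero]
  nlinarith

private lemma saga_strong_mono {E : Type*} [NormedAddCommGroup E] [InnerProductSpace ℝ E]
    [CompleteSpace E] {h : E → ℝ} {G : E → E} {c : ℝ}
    (hdiff : ∀ x, HasGradientAt h (G x) x)
    (hconv : ConvexOn ℝ Set.univ (fun x => h x - c / 2 * ‖x‖ ^ 2)) (x y : E) :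
    c * ‖x - y‖ ^ 2 ≤ ⟪G x - G y, x - y⟫ := by
  have sub : ∀ x v : E, ⟪G x, v⟫ - c * ⟪x, v⟫ ≤
      (h (x + v) - c / 2 * ‖x + v‖ ^ 2) - (h x - c / 2 * ‖x‖ ^ 2) := by
    intro x v
    have hline : HasDerivAt (fun t : ℝ => x + t • v) v 0 := by
      simpa using ((hasDerivAt_id (0:ℝ)).smul_const v).const_add x
    have hf : HasDerivAt (fun t : ℝ => h (x + t • v)) ⟪G x, v⟫ 0 := by
      have hfd : HasFDerivAt h (InnerProductSpace.toDual ℝ E (G x)) ((fun t : ℝ => x + t • v) 0) := by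
        rw [show (fun t : ℝ => x + t • v) 0 = x by simp]
        exact hasGradientAt_iff_hasFDerivAt.mp (hdiff x)
      simpa [InnerProductSpace.toDual_apply_apply, Function.comp_def] using hfd.comp_hasDerivAt 0 hline
    have hexp : ∀ t : ℝ, c / 2 * ‖x + t • v‖ ^ 2 =
        c / 2 * ‖x‖ ^ 2 + (c * ⟪x, v⟫) * t + (c / 2 * ‖v‖ ^ 2) * t ^ 2 := by
      intro t
      rw [norm_add_sq_real, real_inner_smul_right, norm_smul]
      simp [Real.norm_eq_abs, mul_pow, sq_abs]
      ring
    have hq : HasDerivAt (fun t : ℝ => c / 2 * ‖x‖ ^ 2 + (c * ⟪x, v⟫) * t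
        + (c / 2 * ‖v‖ ^ 2) * t ^ 2) (c * ⟪x, v⟫) 0 := by
      have h1 : HasDerivAt (fun t : ℝ => (c * ⟪x, v⟫) * t) (c * ⟪x, v⟫) 0 := by
        simpa using (hasDerivAt_id (0:ℝ)).const_mul (c * ⟪x, v⟫)
      have h2 : HasDerivAt (fun t : ℝ => (c / 2 * ‖v‖ ^ 2) * t ^ 2) 0 0 := by
        simpa using (hasDerivAt_pow 2 (0:ℝ)).const_mul (c / 2 * ‖v‖ ^ 2)
      have e := (h1.const_add (c / 2 * ‖x‖ ^ 2)).add h2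
      rw [add_zero] at e
      exact e
    have hP : HasDerivAt (fun t : ℝ => c / 2 * ‖x + t • v‖ ^ 2) (c * ⟪x, v⟫) 0 := by
      rw [show (fun t : ℝ => c / 2 * ‖x + t • v‖ ^ 2) = (fun t : ℝ => c / 2 * ‖x‖ ^ 2
        + (c * ⟪x, v⟫) * t + (c / 2 * ‖v‖ ^ 2) * t ^ 2) from funext hexp]
      exact hq
    have hψ := hf.sub hP
    have := saga_conv_dir_deriv_le hconv (x := x) (v := v) hψ
    simpa using this
  have I1 := sub x (y - x)
  have I2 := sub y (x - y)
  rw [show x + (y - x) = y by abel] at I1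
  rw [show y + (x - y) = x by abel] at I2
  simp only [inner_sub_left, inner_sub_right] at I1 I2 ⊢
  rw [norm_sub_sq_real]
  have c1 : ⟪x, x⟫ = ‖x‖ ^ 2 := real_inner_self_eq_norm_sq x
  have c2 : ⟪y, y⟫ = ‖y‖ ^ 2 := real_inner_self_eq_norm_sq y
  have c3 : ⟪y, x⟫ = ⟪x, y⟫ := real_inner_comm x y
  rw [c1] at I1
  rw [c3, c2] at I2
  nlinarith [I1, I2]

private lemma saga_norm_lb {E : Type*} [NormedAddCommGroup E] [InnerProductSpace ℝ E]
    [CompleteSpace E] {h : E → ℝ} {G : E → E} {c : ℝ} (hc : 0 < c)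
    (hdiff : ∀ x, HasGradientAt h (G x) x)
    (hconv : ConvexOn ℝ Set.univ (fun x => h x - c / 2 * ‖x‖ ^ 2)) (x y : E) :
    c * ‖x - y‖ ≤ ‖G x - G y‖ := by
  have h1 := saga_strong_mono hdiff hconv x y
  have h2 := real_inner_le_norm (G x - G y) (x - y)
  rcases eq_or_lt_of_le (norm_nonneg (x - y)) with h3 | h3
  · rw [← h3]; simpa using norm_nonneg (G x - G y)
  · nlinarith

end Aux

/-- The SAGA function `V_b` is a divergence function on `ℝ^d × (ℝ^d)^N`. -/
theorem saga_Vb_isDivergence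
    (d N : ℕ) (hN : 1 ≤ N) (c L b : ℝ) (hc : 0 < c) (hcL : c ≤ L) (hb : 0 < b)
    (f : Fin N → EuclideanSpace ℝ (Fin d) → ℝ)
    (g : Fin N → EuclideanSpace ℝ (Fin d) → EuclideanSpace ℝ (Fin d))
    (hdiff : ∀ n x, HasGradientAt (f n) (g n x) x)
    (hconv : ∀ n, ConvexOn ℝ Set.univ (fun x => f n x - c / 2 * ‖x‖ ^ 2))
    (hlip : ∀ n, LipschitzWith (Real.toNNReal L) (g n)) :
    IsDivergence
      (fun (s s' : EuclideanSpace ℝ (Fin d) × (Fin N → EuclideanSpace ℝ (Fin d))) =>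
        ‖s.1 - s'.1‖ ^ 2 + b * ∑ n : Fin N, ‖g n (s.2 n) - g n (s'.2 n)‖ ^ 2) := by
  have hglb : ∀ n (x y : EuclideanSpace ℝ (Fin d)),
      c * ‖x - y‖ ≤ ‖g n x - g n y‖ := fun n => saga_norm_lb hc (hdiff n) (hconv n)
  have hginj : ∀ n (x y : EuclideanSpace ℝ (Fin d)), g n x = g n y → x = y := by
    intro n x y hxy
    have := hglb n x y
    rw [hxy, sub_self, norm_zero] at this
    have : ‖x - y‖ ≤ 0 := by nlinarith
    rw [sub_eq_zero.mp (norm_le_zero_iff.mp this)]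
  constructor
  · -- nonneg
    intro s₁ s₂
    exact add_nonneg (sq_nonneg _)
      (mul_nonneg hb.le (Finset.sum_nonneg fun n _ => sq_nonneg _))
  · -- lsc
    apply Continuous.lowerSemicontinuous
    apply Continuous.add
    · exact (continuous_fst.fst.sub continuous_snd.fst).norm.pow 2
    · exact continuous_const.mul (continuous_finset_sum _ fun n _ =>
        ((((hlip n).continuous.comp ((continuous_apply n).comp continuous_fst.snd)).sub
          ((hlip n).continuous.comp ((continuous_apply n).comp continuous_snd.snd))).norm.pow 2))
  · -- eq_zero_iff
    intro s₁ s₂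
    constructor
    · intro h0
      have hA : 0 ≤ ‖s₁.1 - s₂.1‖ ^ 2 := sq_nonneg _
      have hB : 0 ≤ ∑ n : Fin N, ‖g n (s₁.2 n) - g n (s₂.2 n)‖ ^ 2 :=
        Finset.sum_nonneg fun n _ => sq_nonneg _
      have hA0 : ‖s₁.1 - s₂.1‖ ^ 2 = 0 := by nlinarith
      have hB0 : ∑ n : Fin N, ‖g n (s₁.2 n) - g n (s₂.2 n)‖ ^ 2 = 0 := by nlinarith
      have h1 : s₁.1 = s₂.1 := by
        have := norm_le_zero_iff.mp (le_of_eq (pow_eq_zero_iff (two_ne_zero) |>.mp hA0))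
        exact sub_eq_zero.mp this
      have h2 : s₁.2 = s₂.2 := by
        funext n
        have := (Finset.sum_eq_zero_iff_of_nonneg (fun n _ => sq_nonneg _)).mp hB0 n
          (Finset.mem_univ n)
        have hg0 : g n (s₁.2 n) = g n (s₂.2 n) := by
          have := norm_le_zero_iff.mp (le_of_eq (pow_eq_zero_iff (two_ne_zero) |>.mp this))
          exact sub_eq_zero.mp this
        exact hginj n _ _ hg0
      exact Prod.ext h1 h2
    · rintro rfl
      simp
  · -- symm
    intro s₁ s₂
    congr 1
    · rw [norm_sub_rev]
    · congr 1
      exact Finset.sum_congr rfl fun n _ => by rw [norm_sub_rev]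
  · -- infCompact
    intro q hq K hK
    set m : ℝ := min 1 (b * c ^ 2) with hm_def
    have hm : 0 < m := lt_min one_pos (by positivity)
    obtain ⟨R, hR0, hKR⟩ := hK.isBounded.subset_closedBall_lt 0 0
    refine ⟨Metric.closedBall 0 (R + Real.sqrt (q / m)), isCompact_closedBall _ _, ?_⟩
    intro s₁ hs₁ s₂ hs₂
    have h1 : R + Real.sqrt (q / m) < ‖s₁‖ := by
      simpa [Metric.mem_closedBall, dist_zero_right] using hs₁
    have h2 : ‖s₂‖ ≤ R := by
      simpa [Metric.mem_closedBall, dist_zero_right] using hKR hs₂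
    have hdist : Real.sqrt (q / m) < ‖s₁ - s₂‖ := by
      have := norm_sub_norm_le s₁ s₂
      linarith
    have hsq : q / m ≤ ‖s₁ - s₂‖ ^ 2 := by
      have h4 : 0 ≤ q / m := div_nonneg hq hm.le
      calc q / m = Real.sqrt (q / m) ^ 2 := (Real.sq_sqrt h4).symm
        _ ≤ ‖s₁ - s₂‖ ^ 2 := by
            have := Real.sqrt_nonneg (q / m)
            nlinarith
    -- key comparison
    have hsum : ‖s₁ - s₂‖ ^ 2 ≤ ‖s₁.1 - s₂.1‖ ^ 2 + ∑ n : Fin N, ‖s₁.2 n - s₂.2 n‖ ^ 2 := by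
      set RHS := ‖s₁.1 - s₂.1‖ ^ 2 + ∑ n : Fin N, ‖s₁.2 n - s₂.2 n‖ ^ 2 with hRHS
      have hRHS0 : 0 ≤ RHS :=
        add_nonneg (sq_nonneg _) (Finset.sum_nonneg fun n _ => sq_nonneg _)
      have key : ∀ t : ℝ, 0 ≤ t → t ^ 2 ≤ RHS → t ≤ Real.sqrt RHS := by
        intro t ht hle
        rw [show t = Real.sqrt (t ^ 2) by rw [Real.sqrt_sq ht]]
        exact Real.sqrt_le_sqrt hle
      have hnorm : ‖s₁ - s₂‖ ≤ Real.sqrt RHS := by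
        rw [Prod.norm_def]
        apply max_le
        · apply key _ (norm_nonneg _)
          rw [show (s₁ - s₂).1 = s₁.1 - s₂.1 from rfl]
          exact le_add_of_nonneg_right (Finset.sum_nonneg fun n _ => sq_nonneg _)
        · rw [pi_norm_le_iff_of_nonneg (Real.sqrt_nonneg _)]
          intro n
          apply key _ (norm_nonneg _)
          rw [show (s₁ - s₂).2 n = s₁.2 n - s₂.2 n from rfl]
          calc ‖s₁.2 n - s₂.2 n‖ ^ 2
              ≤ ∑ i : Fin N, ‖s₁.2 i - s₂.2 i‖ ^ 2 :=
                Finset.single_le_sum (f := fun i : Fin N => ‖s₁.2 i - s₂.2 i‖ ^ 2)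
                  (fun i _ => sq_nonneg _) (Finset.mem_univ n)
            _ ≤ RHS := le_add_of_nonneg_left (sq_nonneg _)
      calc ‖s₁ - s₂‖ ^ 2 ≤ Real.sqrt RHS ^ 2 :=
            pow_le_pow_left₀ (norm_nonneg _) hnorm 2
        _ = RHS := Real.sq_sqrt hRHS0
    have hterm : ∀ n : Fin N, c ^ 2 * ‖s₁.2 n - s₂.2 n‖ ^ 2 ≤ ‖g n (s₁.2 n) - g n (s₂.2 n)‖ ^ 2 := by
      intro n
      have h5 := hglb n (s₁.2 n) (s₂.2 n)
      have h6 := mul_self_le_mul_self (mul_nonneg hc.le (norm_nonneg (s₁.2 n - s₂.2 n))) h5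
      nlinarith [h6]
    have hV : m * ‖s₁ - s₂‖ ^ 2 ≤
        ‖s₁.1 - s₂.1‖ ^ 2 + b * ∑ n : Fin N, ‖g n (s₁.2 n) - g n (s₂.2 n)‖ ^ 2 := by
      have hbig : b * c ^ 2 * ∑ n : Fin N, ‖s₁.2 n - s₂.2 n‖ ^ 2 ≤
          b * ∑ n : Fin N, ‖g n (s₁.2 n) - g n (s₂.2 n)‖ ^ 2 := by
        rw [mul_assoc, Finset.mul_sum]
        exact mul_le_mul_of_nonneg_left (Finset.sum_le_sum fun n _ => hterm n) hb.le
      have hm1 : m ≤ 1 := min_le_left _ _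
      have hm2 : m ≤ b * c ^ 2 := min_le_right _ _
      have hs1 : 0 ≤ ‖s₁.1 - s₂.1‖ ^ 2 := sq_nonneg _
      have hs2 : 0 ≤ ∑ n : Fin N, ‖s₁.2 n - s₂.2 n‖ ^ 2 :=
        Finset.sum_nonneg fun n _ => sq_nonneg _
      have t1 := mul_le_mul_of_nonneg_left hsum hm.le
      have t2 : 0 ≤ (1 - m) * ‖s₁.1 - s₂.1‖ ^ 2 :=
        mul_nonneg (by linarith) hs1
      have t3 : 0 ≤ (b * c ^ 2 - m) * ∑ n : Fin N, ‖s₁.2 n - s₂.2 n‖ ^ 2 :=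
        mul_nonneg (by linarith) hs2
      nlinarith [t1, t2, t3, hbig]
    have hfin : q ≤ m * ‖s₁ - s₂‖ ^ 2 := by
      calc q = m * (q / m) := by field_simp
        _ ≤ m * ‖s₁ - s₂‖ ^ 2 := mul_le_mul_of_nonneg_left hsq hm.le
    linarith [hV]
end
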